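/- Let A be a field, C a finite-dimensional local commutative A-algebra whose residue field is A (i.e., the natural A-algebra map A → C/m_C is bijective, where m_C is the maximal ideal of C), and L a field extension of A. Then the base-change L ⊗[A] C is a local ring, its maximal ideal is nilpotent, and the composite map L → L ⊗[A] C → (L ⊗[A] C)/m (sending l to l ⊗ 1 followed by the residue map, where m is the maximal ideal of L ⊗[A] C) is bijective. -/

import Mathlib

open IsLocalRing TensorProduct

/-- Let `A` be a field, `C` a finite-dimensional local commutative `A`-algebra
whose residue field is `A` (i.e. the natural map `A → C/m_C` is bijective), and `L` a field
extension of `A`.  Then `L ⊗[A] C` is a local ring, its maximal ideal is nilpotent, and the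
composite `L → L ⊗[A] C → (L ⊗[A] C)/m` is bijective.  (Locality is expressed by saying that
`L ⊗[A] C` is a local ring, and the claims about "its maximal ideal" are stated for every
maximal ideal, which is equivalent since a local ring has a unique maximal ideal.) -/
theorem baseChange_isLocalRing_and_nilpotent_maximalIdeal_and_residue_bijective
    {A C L : Type*} [Field A] [CommRing C] [Algebra A C] [FiniteDimensional A C]
    [IsLocalRing C]
    (hres : Function.Bijective (algebraMap A (C ⧸ IsLocalRing.maximalIdeal C)))
    [Field L] [Algebra A L] :
    IsLocalRing (TensorProduct A L C) ∧
      ∀ m : Ideal (TensorProduct A L C), m.IsMaximal →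
        IsNilpotent m ∧
          Function.Bijective
            ((Ideal.Quotient.mk m).comp (algebraMap L (TensorProduct A L C))) := by
  -- maximal ideal of C is nilpotent
  have : IsArtinianRing C := isArtinian_of_tower A inferInstance
  have hnil : IsNilpotent (maximalIdeal C) := by
    rw [← IsLocalRing.jacobson_eq_maximalIdeal ⊥ bot_ne_top]
    exact IsArtinianRing.isNilpotent_jacobson_bot
  -- the residue algEquiv
  let e : (C ⧸ maximalIdeal C) ≃ₐ[A] A :=
    (AlgEquiv.ofBijective (Algebra.ofId A _) hres).symm
  let f : C →ₐ[A] A := e.toAlgHom.comp (Ideal.Quotient.mkₐ A (maximalIdeal C))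
  have hfsurj : Function.Surjective f :=
    e.surjective.comp Ideal.Quotient.mk_surjective
  have hfker : RingHom.ker f = maximalIdeal C := by
    have h1 : RingHom.ker f = RingHom.ker (Ideal.Quotient.mkₐ A (maximalIdeal C)) := by
      ext x
      simp [f, RingHom.mem_ker, map_eq_zero_iff _ e.injective]
    rw [h1]
    ext x
    simp [RingHom.mem_ker, Ideal.Quotient.mkₐ_eq_mk, Ideal.Quotient.eq_zero_iff_mem]
  let g := Algebra.TensorProduct.map (AlgHom.id A L) f
  have hgsurj : Function.Surjective g :=
    LinearMap.lTensor_surjective L hfsurj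
  have hgker : RingHom.ker g =
      (maximalIdeal C).map (Algebra.TensorProduct.includeRight : C →ₐ[A] L ⊗[A] C) := by
    rw [Algebra.TensorProduct.lTensor_ker f hfsurj, hfker]
  set I : Ideal (L ⊗[A] C) :=
    (maximalIdeal C).map (Algebra.TensorProduct.includeRight : C →ₐ[A] L ⊗[A] C) with hI
  -- composite with rid
  let ψ : L ⊗[A] C →ₐ[A] L := (Algebra.TensorProduct.rid A A L).toAlgHom.comp g
  have hψsurj : Function.Surjective ψ :=
    (Algebra.TensorProduct.rid A A L).surjective.comp hgsurj
  have hψker : RingHom.ker ψ = I := by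
    rw [← hgker]
    ext x
    simp [ψ, RingHom.mem_ker, map_eq_zero_iff _ (Algebra.TensorProduct.rid A A L).injective]
  -- quotient equiv
  let e2 : (L ⊗[A] C) ⧸ I ≃+* L :=
    (Ideal.quotEquivOfEq hψker.symm).trans (RingHom.quotientKerEquivOfSurjective hψsurj)
  have he2 : ∀ x, e2 (Ideal.Quotient.mk I x) = ψ x := fun x => rfl
  -- I is nilpotent
  have hInil : IsNilpotent I := by
    obtain ⟨n, hn⟩ := hnil
    exact ⟨n, by simp [hI, ← Ideal.map_pow, hn]⟩
  -- I is maximal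
  have hImax : I.IsMaximal :=
    Ideal.Quotient.maximal_of_isField I (MulEquiv.isField (Field.toIsField L) e2.toMulEquiv)
  -- I is contained in every prime
  have hle : ∀ p : Ideal (L ⊗[A] C), p.IsPrime → I ≤ p := by
    intro p hp
    obtain ⟨n, hn⟩ := hInil
    exact hp.le_of_pow_le (by rw [hn]; exact bot_le)
  have heq : ∀ m : Ideal (L ⊗[A] C), m.IsMaximal → m = I := by
    intro m hm
    exact (hImax.eq_of_le hm.ne_top (hle m hm.isPrime)).symm
  refine ⟨IsLocalRing.of_unique_max_ideal ⟨I, hImax, fun m hm => heq m hm⟩, fun m hm => ?_⟩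
  rw [heq m hm]
  refine ⟨hInil, ?_⟩
  have key : ∀ l : L, e2 ((Ideal.Quotient.mk I).comp (algebraMap L (L ⊗[A] C)) l) = l := by
    intro l
    rw [RingHom.comp_apply, he2]
    show (Algebra.TensorProduct.rid A A L) (g (l ⊗ₜ 1)) = l
    simp [g]
  have : ((Ideal.Quotient.mk I).comp (algebraMap L (L ⊗[A] C))) = ⇑e2.symm := by
    funext l
    apply e2.injective
    rw [RingEquiv.apply_symm_apply, key l]
  rw [this]
  exact e2.symm.bijective
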